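/- Let $X_0 \sim \mathcal N(0,I_d)$ and $X_1$ independent, $X_t = tX_1 + (1-t)X_0$, and define the velocity field $u(t,x) = \mathbb E[X_1 - X_0 \mid X_t = x]$. Then for $t \in (0,1)$, $\nabla \log p_{X_t}(x) = \frac{t}{1-t}\,u(t,x) - \frac{1}{1-t}\,x$, where $p_{X_t}$ is the density of $X_t$. -/

import Mathlib

set_option synthInstance.maxHeartbeats 400000

open MeasureTheory

/-- Density of `N(0, v I_d)` on `ℝ^d`. -/
noncomputable def gaussD (d : ℕ) (v : ℝ) (x : EuclideanSpace ℝ (Fin d)) : ℝ :=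
  (2 * Real.pi * v) ^ (-(d : ℝ) / 2) * Real.exp (-‖x‖ ^ 2 / (2 * v))

lemma gaussD_pos {d : ℕ} {v : ℝ} (hv : 0 < v) (x : EuclideanSpace ℝ (Fin d)) :
    0 < gaussD d v x := by
  unfold gaussD
  have := Real.pi_pos
  positivity

lemma gaussD_le {d : ℕ} {v : ℝ} (hv : 0 < v) (x : EuclideanSpace ℝ (Fin d)) :
    gaussD d v x ≤ (2 * Real.pi * v) ^ (-(d : ℝ) / 2) := by
  unfold gaussD
  have h1 : Real.exp (-‖x‖ ^ 2 / (2 * v)) ≤ 1 := by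
    rw [Real.exp_le_one_iff]
    exact div_nonpos_of_nonpos_of_nonneg (neg_nonpos.mpr (by positivity)) (by positivity)
  have := Real.pi_pos
  nlinarith [Real.rpow_pos_of_pos (show (0:ℝ) < 2*Real.pi*v by positivity) (-(d:ℝ)/2)]

lemma aux_r_exp (c r : ℝ) (hc : 0 < c) (hr : 0 ≤ r) :
    r * Real.exp (-(r ^ 2 / c)) ≤ max 1 c := by
  rcases le_or_gt r 1 with h | h
  · calc r * Real.exp (-(r^2/c)) ≤ 1 * 1 := by
          apply mul_le_mul h ?_ (Real.exp_nonneg _) one_pos.le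
          rw [Real.exp_le_one_iff]
          exact neg_nonpos.mpr (by positivity)
      _ ≤ max 1 c := by simp
  · have hr0 : 0 < r := lt_trans one_pos h
    have hr2 : 0 < r^2/c := by positivity
    have hle : r^2/c ≤ Real.exp (r^2/c) := by
      have := Real.add_one_le_exp (r^2/c); linarith
    have h2 : Real.exp (-(r^2/c)) ≤ (r^2/c)⁻¹ := by
      rw [Real.exp_neg]
      gcongr
    calc r * Real.exp (-(r^2/c)) ≤ r * (r^2/c)⁻¹ :=
          mul_le_mul_of_nonneg_left h2 hr0.le
      _ = c / r := by field_simp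
      _ ≤ c := by rw [div_le_iff₀ hr0]; nlinarith
      _ ≤ max 1 c := le_max_right _ _

lemma norm_mul_gaussD_le {d : ℕ} {v : ℝ} (hv : 0 < v) (x : EuclideanSpace ℝ (Fin d)) :
    ‖x‖ * gaussD d v x ≤ (2 * Real.pi * v) ^ (-(d : ℝ) / 2) * max 1 (2 * v) := by
  unfold gaussD
  have h := aux_r_exp (2*v) ‖x‖ (by positivity) (norm_nonneg x)
  have hC : (0:ℝ) < (2 * Real.pi * v) ^ (-(d : ℝ) / 2) := by
    have := Real.pi_pos; positivity
  calc ‖x‖ * ((2 * Real.pi * v) ^ (-(d:ℝ)/2) * Real.exp (-‖x‖^2/(2*v)))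
      = (2 * Real.pi * v) ^ (-(d:ℝ)/2) * (‖x‖ * Real.exp (-(‖x‖^2/(2*v)))) := by
        rw [neg_div]; ring
    _ ≤ _ := mul_le_mul_of_nonneg_left h hC.le

lemma gaussD_continuous {d : ℕ} (v : ℝ) : Continuous (gaussD d v) := by
  unfold gaussD
  exact continuous_const.mul (((continuous_norm.pow 2).neg.div_const _).rexp)

lemma hasFDerivAt_gaussD {d : ℕ} {v : ℝ} (hv : 0 < v) (z : EuclideanSpace ℝ (Fin d)) :
    HasFDerivAt (gaussD d v) ((-v⁻¹ * gaussD d v z) • innerSL ℝ z) z := by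
  have hfun : gaussD d v = fun z : EuclideanSpace ℝ (Fin d) =>
      (2 * Real.pi * v) ^ (-(d : ℝ) / 2) * Real.exp ((-(2*v)⁻¹) * ‖z‖ ^ 2) := by
    funext w
    unfold gaussD
    congr 1
    rw [neg_div, div_eq_mul_inv]
    ring
  have h1 : HasFDerivAt (fun z : EuclideanSpace ℝ (Fin d) => ‖z‖ ^ 2)
      (2 • (innerSL ℝ z)) z := (hasStrictFDerivAt_norm_sq z).hasFDerivAt
  have h2 := ((h1.const_mul (-(2*v)⁻¹)).exp).const_mul ((2 * Real.pi * v) ^ (-(d : ℝ) / 2))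
  rw [hfun]
  refine h2.congr_fderiv ?_
  ext w
  have hv' : v ≠ 0 := hv.ne'
  simp only [ContinuousLinearMap.coe_smul', Pi.smul_apply, innerSL_apply_apply, smul_eq_mul,
    gaussD, two_smul, ContinuousLinearMap.add_apply]
  rw [neg_div, div_eq_mul_inv]
  field_simp
  ring

set_option maxHeartbeats 1000000 in
theorem stmt_10 (d : ℕ)
    (pX1 : EuclideanSpace ℝ (Fin d) → ℝ) (hpX1m : Measurable pX1)
    (hpX10 : ∀ x, 0 ≤ pX1 x) (hpX11 : ∫ x, pX1 x = 1)
    (t : ℝ) (ht : t ∈ Set.Ioo (0 : ℝ) 1)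
    (pt : EuclideanSpace ℝ (Fin d) → ℝ)
    (hpt : pt = fun x => ∫ x1, gaussD d ((1 - t) ^ 2) (x - t • x1) * pX1 x1)
    (condMean : EuclideanSpace ℝ (Fin d) → EuclideanSpace ℝ (Fin d))
    (hcm : condMean = fun x =>
      (pt x)⁻¹ • ∫ x1, (gaussD d ((1 - t) ^ 2) (x - t • x1) * pX1 x1) • x1)
    (u : EuclideanSpace ℝ (Fin d) → EuclideanSpace ℝ (Fin d))
    (hu : u = fun x => -((1 - t)⁻¹ • x) + (1 - t)⁻¹ • condMean x) :
    ∀ x, gradient (fun y => Real.log (pt y)) x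
      = (t / (1 - t)) • u x - (1 - t)⁻¹ • x := by
  obtain ⟨ht0, ht1⟩ := ht
  have h1t : (0:ℝ) < 1 - t := by linarith
  set v : ℝ := (1 - t) ^ 2 with hvdef
  have hv : 0 < v := by positivity
  set C : ℝ := (2 * Real.pi * v) ^ (-(d : ℝ) / 2) with hCdef
  have hC0 : 0 < C := by have := Real.pi_pos; positivity
  -- pX1 is integrable
  have hIntp : Integrable pX1 := by
    by_contra h
    rw [integral_undef h] at hpX11
    norm_num at hpX11
  have hmg : ∀ y : EuclideanSpace ℝ (Fin d),
      Measurable fun a : EuclideanSpace ℝ (Fin d) => gaussD d v (y - t • a) := fun y =>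
    (gaussD_continuous v).measurable.comp (measurable_const.sub (measurable_id.const_smul t))
  have hmgp : ∀ y, Measurable fun a => gaussD d v (y - t • a) * pX1 a :=
    fun y => (hmg y).mul hpX1m
  have hInt1 : ∀ y, Integrable (fun a => gaussD d v (y - t • a) * pX1 a) := by
    intro y
    apply Integrable.mono' (hIntp.const_mul C) (hmgp y).aestronglyMeasurable
    filter_upwards with a
    rw [Real.norm_eq_abs, abs_mul, abs_of_nonneg (gaussD_pos hv _).le, abs_of_nonneg (hpX10 a)]
    exact mul_le_mul_of_nonneg_right (gaussD_le hv _) (hpX10 a)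
  have hInt2 : ∀ y, Integrable (fun a => (gaussD d v (y - t • a) * pX1 a) • a) := by
    intro y
    apply Integrable.mono' (hIntp.const_mul (t⁻¹ * (C * max 1 (2*v) + ‖y‖ * C)))
      (((hmgp y).smul measurable_id).aestronglyMeasurable)
    filter_upwards with a
    rw [Pi.smul_apply', id, norm_smul, Real.norm_eq_abs, abs_mul, abs_of_nonneg (gaussD_pos hv _).le,
      abs_of_nonneg (hpX10 a)]
    have h5 := (gaussD_pos hv (y - t • a)).le
    have key : ‖a‖ * gaussD d v (y - t • a) ≤ t⁻¹ * (C * max 1 (2*v) + ‖y‖ * C) := by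
      have h1 : ‖a‖ = t⁻¹ * ‖t • a‖ := by
        rw [norm_smul, Real.norm_eq_abs, abs_of_pos ht0]; field_simp
      have h2 : ‖t • a‖ ≤ ‖y - t • a‖ + ‖y‖ := by
        calc ‖t • a‖ = ‖(t • a - y) + y‖ := by congr 1; abel
          _ ≤ ‖t • a - y‖ + ‖y‖ := norm_add_le _ _
          _ = ‖y - t • a‖ + ‖y‖ := by rw [norm_sub_rev]
      have h3 := norm_mul_gaussD_le hv (y - t • a)
      have h4 := gaussD_le hv (y - t • a)
      calc ‖a‖ * gaussD d v (y - t • a) = t⁻¹ * (‖t • a‖ * gaussD d v (y - t • a)) := by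
            rw [h1]; ring
        _ ≤ t⁻¹ * ((‖y - t • a‖ + ‖y‖) * gaussD d v (y - t • a)) := by
            apply mul_le_mul_of_nonneg_left _ (by positivity)
            exact mul_le_mul_of_nonneg_right h2 h5
        _ ≤ t⁻¹ * (C * max 1 (2*v) + ‖y‖ * C) := by
            apply mul_le_mul_of_nonneg_left _ (by positivity)
            have h6 := mul_le_mul_of_nonneg_left h4 (norm_nonneg y)
            rw [add_mul]
            rw [← hCdef] at h3
            linarith
    calc gaussD d v (y - t • a) * pX1 a * ‖a‖
        = (‖a‖ * gaussD d v (y - t • a)) * pX1 a := by ring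
      _ ≤ (t⁻¹ * (C * max 1 (2*v) + ‖y‖ * C)) * pX1 a :=
          mul_le_mul_of_nonneg_right key (hpX10 a)
  -- positivity of pt
  have hptpos : ∀ y, 0 < pt y := by
    intro y
    rw [hpt]
    have hnn : 0 ≤ᵐ[volume] fun a => gaussD d v (y - t • a) * pX1 a :=
      Filter.Eventually.of_forall fun a => mul_nonneg (gaussD_pos hv _).le (hpX10 a)
    rcases lt_or_eq_of_le (integral_nonneg (f := fun a => gaussD d v (y - t • a) * pX1 a) fun a => mul_nonneg (gaussD_pos hv (y - t • a)).le (hpX10 a))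
      with h | h
    · exact h
    exfalso
    have h0 := (integral_eq_zero_iff_of_nonneg (f := fun a => gaussD d v (y - t • a) * pX1 a)
      (fun a => mul_nonneg (gaussD_pos hv _).le (hpX10 a)) (hInt1 y)).mp h.symm
    have hz : pX1 =ᵐ[volume] 0 := by
      filter_upwards [h0] with a ha
      have hg := gaussD_pos hv (y - t • a)
      simp only [Pi.zero_apply] at ha ⊢
      rcases mul_eq_zero.mp ha with h' | h'
      · exact absurd h' hg.ne'
      · exact h'
    rw [integral_congr_ae hz] at hpX11
    simp at hpX11
  intro x
  have hpt0 : pt x ≠ 0 := (hptpos x).ne'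
  have h1t0 : (1:ℝ) - t ≠ 0 := h1t.ne'
  set c : EuclideanSpace ℝ (Fin d) → EuclideanSpace ℝ (Fin d) → ℝ :=
    fun y a => pX1 a * (-v⁻¹ * gaussD d v (y - t • a)) with hc
  -- differentiation under the integral sign
  have hderiv : HasFDerivAt (fun y => ∫ a, gaussD d v (y - t • a) * pX1 a)
      (∫ a, c x a • innerSL ℝ (x - t • a)) x := by
    apply hasFDerivAt_integral_of_dominated_of_fderiv_le
      (F' := fun y a => c y a • innerSL ℝ (y - t • a))
      (bound := fun a => v⁻¹ * (C * max 1 (2*v)) * pX1 a) (Metric.ball_mem_nhds x one_pos)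
    · exact Filter.Eventually.of_forall fun y => (hmgp y).aestronglyMeasurable
    · exact hInt1 x
    · apply StronglyMeasurable.aestronglyMeasurable
      apply StronglyMeasurable.smul (f := fun a => c x a) (g := fun a => innerSL ℝ (x - t • a))
      · exact (hpX1m.mul ((hmg x).const_mul (-v⁻¹))).stronglyMeasurable
      · exact ((innerSL ℝ).continuous.comp
          (continuous_const.sub (continuous_id.const_smul t))).stronglyMeasurable
    · filter_upwards with a y hy
      show ‖c y a • innerSL ℝ (y - t • a)‖ ≤ v⁻¹ * (C * max 1 (2*v)) * pX1 a
      have hns : c y a • innerSL ℝ (y - t • a) = innerSL ℝ (c y a • (y - t • a)) := by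
        refine ContinuousLinearMap.ext fun w => ?_
        simp only [ContinuousLinearMap.coe_smul', Pi.smul_apply, innerSL_apply_apply, smul_eq_mul]
        exact (real_inner_smul_left _ _ _).symm
      rw [hns, innerSL_apply_norm, norm_smul, Real.norm_eq_abs]
      have h5 := (gaussD_pos hv (y - t • a)).le
      have hp := hpX10 a
      have habs : |c y a| = v⁻¹ * gaussD d v (y - t • a) * pX1 a := by
        rw [hc]
        simp only []
        rw [abs_mul, abs_of_nonneg hp, abs_mul, abs_neg, abs_of_nonneg (inv_nonneg.mpr hv.le),
          abs_of_nonneg h5]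
        ring
      rw [habs]
      have h3 := norm_mul_gaussD_le hv (y - t • a)
      rw [← hCdef] at h3
      have hvi : (0:ℝ) ≤ v⁻¹ := inv_nonneg.mpr hv.le
      calc v⁻¹ * gaussD d v (y - t • a) * pX1 a * ‖y - t • a‖
          = v⁻¹ * (‖y - t • a‖ * gaussD d v (y - t • a)) * pX1 a := by ring
        _ ≤ v⁻¹ * (C * max 1 (2*v)) * pX1 a := by
            apply mul_le_mul_of_nonneg_right _ hp
            exact mul_le_mul_of_nonneg_left h3 hvi
    · exact (hIntp.const_mul _)
    · filter_upwards with a y hy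
      show HasFDerivAt (fun y => gaussD d v (y - t • a) * pX1 a)
        (c y a • innerSL ℝ (y - t • a)) y
      have h1 : HasFDerivAt (fun y : EuclideanSpace ℝ (Fin d) => y - t • a)
          (ContinuousLinearMap.id ℝ (EuclideanSpace ℝ (Fin d))) y :=
        (hasFDerivAt_id y).sub_const (t • a)
      have h2 := (hasFDerivAt_gaussD hv (y - t • a)).comp y h1
      have h3 := h2.mul_const (pX1 a)
      have heq : c y a • innerSL ℝ (y - t • a) =
          pX1 a • (((-v⁻¹ * gaussD d v (y - t • a)) • innerSL ℝ (y - t • a)).comp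
            (ContinuousLinearMap.id ℝ (EuclideanSpace ℝ (Fin d)))) := by
        rw [ContinuousLinearMap.comp_id, smul_smul]
      rw [heq]
      exact h3
  have hD : HasFDerivAt pt (∫ a, c x a • innerSL ℝ (x - t • a)) x := by
    rw [hpt]; exact hderiv
  have hlog := hD.log hpt0
  -- integrability of the vector-valued integrands
  have hInt2' : Integrable (fun a => t • ((gaussD d v (x - t • a) * pX1 a) • a)) :=
    (hInt2 x).smul t
  have hInt3 : Integrable (fun a => (gaussD d v (x - t • a) * pX1 a) • (x - t • a)) := by
    have he : (fun a => (gaussD d v (x - t • a) * pX1 a) • (x - t • a))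
        = fun a => (gaussD d v (x - t • a) * pX1 a) • x
            - t • ((gaussD d v (x - t • a) * pX1 a) • a) := by
      funext a; rw [smul_sub, smul_comm]
    rw [he]
    exact ((hInt1 x).smul_const x).sub hInt2'
  have hIntcz : Integrable (fun a => c x a • (x - t • a)) := by
    have he : (fun a => c x a • (x - t • a)) =
        fun a => (-v⁻¹) • ((gaussD d v (x - t • a) * pX1 a) • (x - t • a)) := by
      funext a
      rw [smul_smul]
      congr 1
      rw [hc]; ring
    rw [he]
    exact hInt3.smul (-v⁻¹)
  have hDval : (∫ a, c x a • innerSL ℝ (x - t • a))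
      = innerSL ℝ (∫ a, c x a • (x - t • a)) := by
    rw [← ContinuousLinearMap.integral_comp_comm (innerSL ℝ) hIntcz]
    congr 1
    funext a
    refine ContinuousLinearMap.ext fun w => ?_
    simp only [ContinuousLinearMap.coe_smul', Pi.smul_apply, innerSL_apply_apply, smul_eq_mul]
    exact (real_inner_smul_left _ _ _).symm
  set M := ∫ a, (gaussD d v (x - t • a) * pX1 a) • a with hM
  have hval : (∫ a, c x a • (x - t • a)) = (-v⁻¹) • ((pt x) • x - t • M) := by
    have e1 : (fun a => c x a • (x - t • a)) = fun a =>
        (-v⁻¹) • ((gaussD d v (x - t • a) * pX1 a) • x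
          - t • ((gaussD d v (x - t • a) * pX1 a) • a)) := by
      funext a
      have hca : c x a = (-v⁻¹) * (gaussD d v (x - t • a) * pX1 a) := by rw [hc]; ring
      rw [hca, mul_smul, smul_sub, smul_comm t]
    rw [e1, integral_smul, integral_sub ((hInt1 x).smul_const x) hInt2',
      integral_smul_const, integral_smul]
    congr 2
    rw [hpt]
  have hgrad : HasGradientAt (fun y => Real.log (pt y))
      ((pt x)⁻¹ • ((-v⁻¹) • ((pt x) • x - t • M))) x := by
    rw [hasGradientAt_iff_hasFDerivAt]
    refine hlog.congr_fderiv ?_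
    rw [hDval, hval]
    ext w
    simp [real_inner_smul_left]
  rw [hgrad.gradient, hu, hcm]
  simp only [← hM]
  rw [hvdef] at *
  match_scalars
  all_goals try (field_simp; ring)
  all_goals (rw [← inv_pow]; ring)
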